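/- Let X = ℂⁿ/Γ be a toroidal group that is geometrically simple, i.e., X contains no closed toroidal subgroup other than {0} and X. Then every nonzero endomorphism φ of X has injective linear extension Φ : ℂⁿ → ℂⁿ; consequently End_ℚ(X) := End(X) ⊗ ℚ is a division algebra over ℚ. -/

import Mathlib

open Pointwise

/-- The irrationality condition characterizing toroidal quotients:
`E/(E ∩ Γ)` is toroidal iff the only `ℂ`-linear functional on `E` sending
`E ∩ Γ` into `ℤ` is zero. -/
def IsToroidalSubspace {n : ℕ} (Γ : AddSubgroup (Fin n → ℂ))
    (E : Submodule ℂ (Fin n → ℂ)) : Prop :=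
  ∀ f : E →ₗ[ℂ] ℂ, (∀ x : E, (x : Fin n → ℂ) ∈ Γ → ∃ k : ℤ, f x = k) → f = 0

/-- A toroidal group `ℂⁿ/Γ` is geometrically simple if it contains no closed
toroidal subgroup other than `0` and itself. -/
def GeometricallySimple {n : ℕ} (Γ : AddSubgroup (Fin n → ℂ)) : Prop :=
  ∀ E : Submodule ℂ (Fin n → ℂ),
    IsClosed ((E : Set (Fin n → ℂ)) + (Γ : Set (Fin n → ℂ))) →
    IsToroidalSubspace Γ E → E = ⊥ ∨ E = ⊤



/-- Preconnected subsets of uniformly separated sets are subsingletons. -/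
lemma subsingleton_of_preconnected_of_sep {α : Type*} [PseudoMetricSpace α]
    {S T : Set α} (hST : S ⊆ T) {ε : ℝ} (hε : 0 < ε)
    (hsep : ∀ x ∈ T, ∀ y ∈ T, x ≠ y → ε ≤ dist x y)
    (hS : IsPreconnected S) : S.Subsingleton := by
  intro s hs t ht
  by_contra hne
  have hU1 : IsOpen {x : α | dist x s < ε / 2} :=
    isOpen_lt (continuous_id.dist continuous_const) continuous_const
  have hU2 : IsOpen {x : α | ε / 2 < dist x s} :=
    isOpen_lt continuous_const (continuous_id.dist continuous_const)
  have hcover : S ⊆ {x : α | dist x s < ε / 2} ∪ {x : α | ε / 2 < dist x s} := by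
    intro x hx
    rcases eq_or_ne x s with rfl | hxs
    · left; simpa using by positivity
    · right
      have := hsep x (hST hx) s (hST hs) hxs
      simpa using lt_of_lt_of_le (by linarith) this
  have h1 : (S ∩ {x : α | dist x s < ε / 2}).Nonempty :=
    ⟨s, hs, by simpa using by positivity⟩
  have h2 : (S ∩ {x : α | ε / 2 < dist x s}).Nonempty := by
    refine ⟨t, ht, ?_⟩
    have := hsep t (hST ht) s (hST hs) (fun h => hne h.symm)
    simpa using lt_of_lt_of_le (by linarith) this
  obtain ⟨x, -, hx1, hx2⟩ := hS _ _ hU1 hU2 hcover h1 h2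
  simp only [Set.mem_setOf_eq] at hx1 hx2
  linarith

lemma isClosed_intRange : IsClosed (Set.range ((↑) : ℤ → ℂ)) := by
  have h2 : Topology.IsClosedEmbedding ((↑) : ℝ → ℂ) := Complex.isometry_ofReal.isClosedEmbedding
  have := (h2.comp Int.isClosedEmbedding_coe_real).isClosed_range
  have heq : Set.range ((↑) : ℤ → ℂ) = Set.range (((↑) : ℝ → ℂ) ∘ ((↑) : ℤ → ℝ)) := by
    ext x
    constructor
    · rintro ⟨k, rfl⟩; exact ⟨k, by simp [Function.comp]⟩
    · rintro ⟨k, rfl⟩; exact ⟨k, by simp [Function.comp]⟩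
  rw [heq]
  exact this

lemma intRange_sep : ∀ x ∈ Set.range ((↑) : ℤ → ℂ), ∀ y ∈ Set.range ((↑) : ℤ → ℂ),
    x ≠ y → (1 : ℝ) ≤ dist x y := by
  rintro x ⟨a, rfl⟩ y ⟨b, rfl⟩ hxy
  have hab : a ≠ b := fun h => hxy (by rw [h])
  have : dist (a : ℂ) (b : ℂ) = |(a : ℝ) - (b : ℝ)| := by
    rw [Complex.dist_eq]
    rw [show ((a : ℂ) - (b : ℂ)) = (((a : ℝ) - (b : ℝ) : ℝ) : ℂ) by push_cast; ring]
    rw [Complex.norm_real, Real.norm_eq_abs]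
  rw [this]
  have : ((a - b : ℤ) : ℝ) = (a : ℝ) - (b : ℝ) := by push_cast; ring
  rw [← this, ← Int.cast_abs]
  exact_mod_cast Int.one_le_abs (sub_ne_zero.mpr hab)

section Part2
variable {n : ℕ} (Γ : AddSubgroup (Fin n → ℂ))

lemma gamma_sep [DiscreteTopology Γ] :
    ∃ ε > 0, ∀ γ ∈ Γ, ‖γ‖ < ε → γ = 0 := by
  have h0 : IsOpen ({(0 : Γ)} : Set Γ) := isOpen_discrete _
  rw [Metric.isOpen_iff] at h0
  obtain ⟨ε, hε, hball⟩ := h0 0 rfl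
  refine ⟨ε, hε, fun γ hγ hn => ?_⟩
  have hm : (⟨γ, hγ⟩ : Γ) ∈ Metric.ball (0 : Γ) ε := by
    rw [Metric.mem_ball, Subtype.dist_eq]
    simpa [dist_zero_right] using hn
  simpa [Subtype.ext_iff] using hball hm

lemma gamma_pairwise_sep [DiscreteTopology Γ] :
    ∃ ε > 0, ∀ x ∈ (Γ : Set (Fin n → ℂ)), ∀ y ∈ (Γ : Set (Fin n → ℂ)),
      x ≠ y → ε ≤ dist x y := by
  obtain ⟨ε, hε, hsep⟩ := gamma_sep Γ
  refine ⟨ε, hε, fun x hx y hy hxy => ?_⟩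
  by_contra h
  push_neg at h
  have : x - y ∈ Γ := sub_mem hx hy
  have := hsep _ this (by rwa [← dist_eq_norm])
  exact hxy (sub_eq_zero.mp this)

variable (htor : IsToroidalSubspace Γ (⊤ : Submodule ℂ (Fin n → ℂ)))
include htor

lemma htor_ambient :
    ∀ g : (Fin n → ℂ) →ₗ[ℂ] ℂ, (∀ γ ∈ Γ, ∃ k : ℤ, g γ = (k : ℂ)) → g = 0 := by
  intro g hg
  have h := htor (g ∘ₗ (⊤ : Submodule ℂ (Fin n → ℂ)).subtype)
    (fun x hx => hg x hx)
  refine LinearMap.ext fun x => ?_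
  have hx := congrArg (fun (k : (⊤ : Submodule ℂ (Fin n → ℂ)) →ₗ[ℂ] ℂ) => k ⟨x, trivial⟩) h
  simpa using hx

lemma span_gamma_top :
    Submodule.span ℂ (Γ : Set (Fin n → ℂ)) = ⊤ := by
  by_contra h
  obtain ⟨g, hg0, hgbot⟩ :=
    Submodule.exists_dual_map_eq_bot_of_lt_top (lt_top_iff_ne_top.mpr h) inferInstance
  refine hg0 (htor_ambient Γ htor g fun γ hγ => ⟨0, ?_⟩)
  have : g γ ∈ (Submodule.span ℂ (Γ : Set (Fin n → ℂ))).map g :=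
    ⟨γ, Submodule.subset_span hγ, rfl⟩
  rw [hgbot] at this
  simpa using this

lemma seed_toroidal (W : (Fin n → ℂ) →ₗ[ℂ] (Fin n → ℂ)) (hW : ∀ γ ∈ Γ, W γ ∈ Γ) :
    IsToroidalSubspace Γ (LinearMap.range W) := by
  intro f hf
  have hg : (f ∘ₗ W.rangeRestrict) = 0 := by
    refine htor_ambient Γ htor _ fun γ hγ => ?_
    exact hf ⟨W γ, LinearMap.mem_range_self W γ⟩ (hW γ hγ)
  refine LinearMap.ext fun y => ?_
  obtain ⟨x, hx⟩ := y.2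
  have h2 : f ⟨W x, LinearMap.mem_range_self W x⟩ = 0 := by
    have := congrArg (fun (h : (Fin n → ℂ) →ₗ[ℂ] ℂ) => h x) hg
    exact this
  have h3 : (⟨W x, LinearMap.mem_range_self W x⟩ : LinearMap.range W) = y := Subtype.ext hx
  rw [← h3]
  simpa using h2

end Part2

section Machine
variable {n : ℕ} (Γ : AddSubgroup (Fin n → ℂ)) (F : Submodule ℂ (Fin n → ℂ))

/-- The closure of `F + Γ`, as a `ℤ`-submodule. -/
noncomputable def Hmod : Submodule ℤ (Fin n → ℂ) :=
  ((F.restrictScalars ℤ) ⊔ Γ.toIntSubmodule).topologicalClosure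

lemma Hmod_coe :
    (Hmod Γ F : Set (Fin n → ℂ)) = closure ((F : Set (Fin n → ℂ)) + (Γ : Set (Fin n → ℂ))) := by
  rw [Hmod, Submodule.topologicalClosure_coe, Submodule.coe_sup]
  rfl

lemma Hmod_closed : IsClosed (Hmod Γ F : Set (Fin n → ℂ)) := by
  rw [Hmod_coe]; exact isClosed_closure

lemma subset_Hmod_left : (F : Set (Fin n → ℂ)) ⊆ Hmod Γ F := by
  intro x hx
  rw [Hmod_coe]
  exact subset_closure (by simpa using Set.add_mem_add hx (AddSubgroup.zero_mem Γ))

lemma subset_Hmod_right : (Γ : Set (Fin n → ℂ)) ⊆ Hmod Γ F := by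
  intro x hx
  rw [Hmod_coe]
  exact subset_closure (by simpa using Set.add_mem_add (Submodule.zero_mem F) hx)

/-- The "connected component direction" of the closure of `F + Γ`. -/
noncomputable def Vmod : Submodule ℝ (Fin n → ℂ) where
  carrier := {x | ∀ t : ℝ, t • x ∈ Hmod Γ F}
  zero_mem' := fun t => by simpa using (Hmod Γ F).zero_mem
  add_mem' := fun hx hy t => by
    rw [smul_add]; exact (Hmod Γ F).add_mem (hx t) (hy t)
  smul_mem' := fun r x hx t => by
    rw [smul_smul]; exact hx (t * r)

lemma mem_Vmod {x : Fin n → ℂ} : x ∈ Vmod Γ F ↔ ∀ t : ℝ, t • x ∈ Hmod Γ F := Iff.rfl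

lemma F_le_Vmod : (F : Set (Fin n → ℂ)) ⊆ (Vmod Γ F : Set (Fin n → ℂ)) := by
  intro x hx t
  have : t • x = ((t : ℂ)) • x := by
    rw [← algebraMap_smul ℂ t x]; rfl
  rw [this]
  exact subset_Hmod_left Γ F (F.smul_mem _ hx)

lemma Vmod_le_Hmod : (Vmod Γ F : Set (Fin n → ℂ)) ⊆ (Hmod Γ F : Set (Fin n → ℂ)) := by
  intro x hx
  simpa using (mem_Vmod Γ F).mp hx 1

end Machine

section Machine2
variable {n : ℕ} (Γ : AddSubgroup (Fin n → ℂ)) (F : Submodule ℂ (Fin n → ℂ))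

lemma Theta_maps_Hmod_to_Gamma [DiscreteTopology Γ]
    (Θ : (Fin n → ℂ) →ₗ[ℂ] (Fin n → ℂ)) (hΘΓ : ∀ γ ∈ Γ, Θ γ ∈ Γ)
    (hFker : ∀ x ∈ F, Θ x = 0) :
    ∀ x ∈ Hmod Γ F, Θ x ∈ Γ := by
  intro x hx
  have hcont : Continuous Θ := Θ.continuous_of_finiteDimensional
  have hG : Θ '' ((F : Set (Fin n → ℂ)) + (Γ : Set (Fin n → ℂ))) ⊆ (Γ : Set (Fin n → ℂ)) := by
    rintro _ ⟨y, hy, rfl⟩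
    obtain ⟨a, ha, b, hb, rfl⟩ := Set.mem_add.mp hy
    rw [map_add, hFker a ha, zero_add]
    exact hΘΓ b hb
  have h1 : Θ x ∈ Θ '' closure ((F : Set (Fin n → ℂ)) + (Γ : Set (Fin n → ℂ))) :=
    ⟨x, by rwa [← Hmod_coe], rfl⟩
  have h2 := image_closure_subset_closure_image (s := ((F : Set (Fin n → ℂ)) + (Γ : Set (Fin n → ℂ)))) hcont h1
  have h3 : closure (Θ '' ((F : Set (Fin n → ℂ)) + (Γ : Set (Fin n → ℂ)))) ⊆ (Γ : Set (Fin n → ℂ)) := by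
    have hcl : IsClosed (Γ : Set (Fin n → ℂ)) := AddSubgroup.isClosed_of_discrete
    calc closure (Θ '' ((F : Set (Fin n → ℂ)) + (Γ : Set (Fin n → ℂ))))
        ⊆ closure (Γ : Set (Fin n → ℂ)) := closure_mono hG
      _ = (Γ : Set (Fin n → ℂ)) := hcl.closure_eq
  exact h3 h2

lemma Theta_Vmod_zero [DiscreteTopology Γ]
    (Θ : (Fin n → ℂ) →ₗ[ℂ] (Fin n → ℂ)) (hΘΓ : ∀ γ ∈ Γ, Θ γ ∈ Γ)
    (hFker : ∀ x ∈ F, Θ x = 0) :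
    ∀ x ∈ Vmod Γ F, Θ x = 0 := by
  intro x hx
  set c : ℝ → (Fin n → ℂ) := fun t => Θ (t • x) with hc
  have hcont : Continuous c :=
    Θ.continuous_of_finiteDimensional.comp (continuous_id.smul continuous_const)
  have himg : c '' Set.univ ⊆ (Γ : Set (Fin n → ℂ)) := by
    rintro _ ⟨t, -, rfl⟩
    exact Theta_maps_Hmod_to_Gamma Γ F Θ hΘΓ hFker _ (hx t)
  have hpre : IsPreconnected (c '' Set.univ) :=
    isPreconnected_univ.image c hcont.continuousOn
  obtain ⟨ε, hε, hsep⟩ := gamma_pairwise_sep Γ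
  have hsub : (c '' Set.univ).Subsingleton :=
    subsingleton_of_preconnected_of_sep himg hε hsep hpre
  have h01 : c 1 = c 0 := hsub ⟨1, trivial, rfl⟩ ⟨0, trivial, rfl⟩
  have : c 0 = 0 := by simp [hc]
  have h1 : c 1 = Θ x := by simp [hc]
  rw [← h1, h01, this]

end Machine2

section Machine3
variable {n : ℕ} (Γ : AddSubgroup (Fin n → ℂ)) (F : Submodule ℂ (Fin n → ℂ))

lemma compl_discrete (U : Submodule ℝ (Fin n → ℂ)) (hUV : IsCompl (Vmod Γ F) U) :
    ∃ ε > 0, ∀ x ∈ Hmod Γ F, x ∈ U → ‖x‖ < ε → x = 0 := by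
  by_contra hcon
  push_neg at hcon
  have hex : ∀ j : ℕ, ∃ x, x ∈ Hmod Γ F ∧ x ∈ U ∧ ‖x‖ < 1 / (j + 1) ∧ x ≠ 0 := by
    intro j
    obtain ⟨x, hx1, hx2, hx3, hx4⟩ := hcon (1 / (j + 1)) (by positivity)
    exact ⟨x, hx1, hx2, hx3, hx4⟩
  choose u hu1 hu2 hu3 hu4 using hex
  have hnorm_ne : ∀ j, ‖u j‖ ≠ 0 := fun j => norm_ne_zero_iff.mpr (hu4 j)
  set w : ℕ → (Fin n → ℂ) := fun j => (‖u j‖)⁻¹ • u j with hw_def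
  have hw_mem : ∀ j, w j ∈ Metric.sphere (0 : Fin n → ℂ) 1 ∩ (U : Set (Fin n → ℂ)) := by
    intro j
    constructor
    · simp only [mem_sphere_iff_norm, sub_zero, hw_def, norm_smul, norm_inv,
        Real.norm_eq_abs, abs_norm]
      exact inv_mul_cancel₀ (hnorm_ne j)
    · exact U.smul_mem _ (hu2 j)
  have hUclosed : IsClosed (U : Set (Fin n → ℂ)) := Submodule.closed_of_finiteDimensional U
  have hcpt : IsCompact (Metric.sphere (0 : Fin n → ℂ) 1 ∩ (U : Set (Fin n → ℂ))) :=
    (isCompact_sphere 0 1).inter_right hUclosed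
  obtain ⟨z, hz, φ, hφ, hlim⟩ := hcpt.tendsto_subseq hw_mem
  have hz_norm : ‖z‖ = 1 := by simpa [mem_sphere_iff_norm] using hz.1
  have hz_U : z ∈ U := hz.2
  have hu_small : ∀ j, ‖u (φ j)‖ ≤ 1 / (j + 1) := by
    intro j
    have h1 : ‖u (φ j)‖ < 1 / (φ j + 1) := hu3 (φ j)
    have h2 : (1 : ℝ) / (φ j + 1) ≤ 1 / (j + 1) := by
      apply one_div_le_one_div_of_le (by positivity)
      have hle : (j : ℝ) ≤ (φ j : ℝ) := Nat.cast_le.mpr hφ.le_apply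
      linarith
    linarith
  have hu_to_zero : Filter.Tendsto (fun j => ‖u (φ j)‖) Filter.atTop (nhds 0) := by
    apply squeeze_zero (fun j => norm_nonneg _) hu_small
    exact tendsto_one_div_add_atTop_nhds_zero_nat
  -- z is in Vmod
  have hzV : z ∈ Vmod Γ F := by
    intro t
    set k : ℕ → ℤ := fun j => round (t / ‖u (φ j)‖) with hk_def
    have hmem : ∀ j, ((k j : ℤ) • u (φ j)) ∈ Hmod Γ F := fun j =>
      zsmul_mem (hu1 (φ j)) (k j)
    have heq : ∀ j, ((k j : ℤ) • u (φ j)) = ((k j : ℝ)) • u (φ j) := by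
      intro j
      rw [Int.cast_smul_eq_zsmul]
    have hbound : ∀ j, ‖((k j : ℝ)) • u (φ j) - t • z‖ ≤
        ‖u (φ j)‖ / 2 + |t| * ‖w (φ j) - z‖ := by
      intro j
      have hu_eq : u (φ j) = ‖u (φ j)‖ • w (φ j) := by
        rw [hw_def]
        rw [smul_smul]
        rw [mul_inv_cancel₀ (hnorm_ne (φ j)), one_smul]
      have step1 : ((k j : ℝ)) • u (φ j) - t • w (φ j)
          = ((k j : ℝ) * ‖u (φ j)‖ - t) • w (φ j) := by
        rw [sub_smul, mul_smul, ← hu_eq]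
      have hwnorm : ‖w (φ j)‖ = 1 := by
        have := (hw_mem (φ j)).1
        simpa [mem_sphere_iff_norm] using this
      have t1 : ‖((k j : ℝ)) • u (φ j) - t • w (φ j)‖ ≤ ‖u (φ j)‖ / 2 := by
        rw [step1, norm_smul, hwnorm, mul_one, Real.norm_eq_abs]
        have habs : |(k j : ℝ) - t / ‖u (φ j)‖| ≤ 1 / 2 := by
          have := abs_sub_round (t / ‖u (φ j)‖)
          rw [hk_def]
          rw [abs_sub_comm] at this
          exact this
        have hpos : (0 : ℝ) < ‖u (φ j)‖ := lt_of_le_of_ne (norm_nonneg _) (Ne.symm (hnorm_ne (φ j)))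
        have : |(k j : ℝ) * ‖u (φ j)‖ - t| = ‖u (φ j)‖ * |(k j : ℝ) - t / ‖u (φ j)‖| := by
          rw [← abs_of_pos hpos, ← abs_mul]
          congr 1
          field_simp
          rw [abs_of_pos hpos]; ring
        rw [this]
        calc ‖u (φ j)‖ * |(k j : ℝ) - t / ‖u (φ j)‖| ≤ ‖u (φ j)‖ * (1 / 2) := by
              apply mul_le_mul_of_nonneg_left habs (le_of_lt hpos)
          _ = ‖u (φ j)‖ / 2 := by ring
      have t2 : ‖t • w (φ j) - t • z‖ = |t| * ‖w (φ j) - z‖ := by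
        rw [← smul_sub, norm_smul, Real.norm_eq_abs]
      calc ‖((k j : ℝ)) • u (φ j) - t • z‖
          = ‖(((k j : ℝ)) • u (φ j) - t • w (φ j)) + (t • w (φ j) - t • z)‖ := by
            rw [sub_add_sub_cancel]
        _ ≤ ‖((k j : ℝ)) • u (φ j) - t • w (φ j)‖ + ‖t • w (φ j) - t • z‖ := norm_add_le _ _
        _ ≤ ‖u (φ j)‖ / 2 + |t| * ‖w (φ j) - z‖ := add_le_add t1 (le_of_eq t2)
    have hb_zero : Filter.Tendsto
        (fun j => ‖u (φ j)‖ / 2 + |t| * ‖w (φ j) - z‖) Filter.atTop (nhds 0) := by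
      have h1 : Filter.Tendsto (fun j => ‖u (φ j)‖ / 2) Filter.atTop (nhds 0) := by
        simpa using hu_to_zero.div_const 2
      have h2 : Filter.Tendsto (fun j => ‖w (φ j) - z‖) Filter.atTop (nhds 0) := by
        have := (tendsto_iff_norm_sub_tendsto_zero).mp hlim
        simpa [Function.comp] using this
      have h3 : Filter.Tendsto (fun j => |t| * ‖w (φ j) - z‖) Filter.atTop (nhds 0) := by
        simpa using h2.const_mul |t|
      simpa using h1.add h3
    have hconv : Filter.Tendsto (fun j => ((k j : ℝ)) • u (φ j)) Filter.atTop (nhds (t • z)) := by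
      rw [tendsto_iff_norm_sub_tendsto_zero]
      exact squeeze_zero (fun j => norm_nonneg _) hbound hb_zero
    have : t • z ∈ closure (Hmod Γ F : Set (Fin n → ℂ)) := by
      apply mem_closure_of_tendsto hconv
      filter_upwards with j
      rw [← heq j]
      exact hmem j
    rwa [(Hmod_closed Γ F).closure_eq] at this
  have : z ∈ (Vmod Γ F) ⊓ U := ⟨hzV, hz_U⟩
  rw [hUV.inf_eq_bot] at this
  rw [Submodule.mem_bot] at this
  rw [this] at hz_norm
  simp at hz_norm

end Machine3

section Machine4
variable {n : ℕ} (Γ : AddSubgroup (Fin n → ℂ)) (F : Submodule ℂ (Fin n → ℂ))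
  (U : Submodule ℝ (Fin n → ℂ)) (hUV : IsCompl (Vmod Γ F) U)

/-- Projection onto `U` along `Vmod Γ F`, as an endomorphism of the ambient space. -/
noncomputable def PU : (Fin n → ℂ) →ₗ[ℝ] (Fin n → ℂ) :=
  U.subtype ∘ₗ (U.linearProjOfIsCompl (Vmod Γ F) hUV.symm)

lemma PU_mem_U (x : Fin n → ℂ) : PU Γ F U hUV x ∈ U := (U.linearProjOfIsCompl _ hUV.symm x).2

lemma sub_PU_mem_V (x : Fin n → ℂ) : x - PU Γ F U hUV x ∈ Vmod Γ F := by
  have h := Submodule.projection_add_projection_eq_self hUV.symm x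
  have : x - PU Γ F U hUV x = ((Vmod Γ F).linearProjOfIsCompl U hUV x : Fin n → ℂ) := by
    rw [PU]
    simp only [LinearMap.coe_comp, Function.comp_apply, Submodule.coe_subtype]
    have h2 := Submodule.projection_add_projection_eq_self hUV x
    exact (eq_sub_of_add_eq h2).symm
  rw [this]
  exact ((Vmod Γ F).linearProjOfIsCompl U hUV x).2

lemma PU_eq_zero_of_mem_V {x : Fin n → ℂ} (hx : x ∈ Vmod Γ F) : PU Γ F U hUV x = 0 := by
  rw [PU]
  simp only [LinearMap.coe_comp, Function.comp_apply, Submodule.coe_subtype]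
  exact congrArg Subtype.val (Submodule.linearProjOfIsCompl_apply_right' hUV.symm hx)

lemma mem_V_of_PU_eq_zero {x : Fin n → ℂ} (hx : PU Γ F U hUV x = 0) : x ∈ Vmod Γ F := by
  have := sub_PU_mem_V Γ F U hUV x
  rwa [hx, sub_zero] at this

lemma PU_mem_Hmod {x : Fin n → ℂ} (hx : x ∈ Hmod Γ F) : PU Γ F U hUV x ∈ Hmod Γ F := by
  have h1 : x - PU Γ F U hUV x ∈ Vmod Γ F := sub_PU_mem_V Γ F U hUV x
  have h2 : x - PU Γ F U hUV x ∈ Hmod Γ F := Vmod_le_Hmod Γ F h1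
  have : PU Γ F U hUV x = x - (x - PU Γ F U hUV x) := by ring_nf
  rw [this]
  exact sub_mem hx h2

lemma PU_continuous : Continuous (PU Γ F U hUV) :=
  (PU Γ F U hUV).continuous_of_finiteDimensional

lemma sum_mem_Hmod {x : Fin n → ℂ} (hx : x ∈ (F : Set (Fin n → ℂ)) + (Γ : Set (Fin n → ℂ))) :
    x ∈ Hmod Γ F := by
  have : x ∈ closure ((F : Set (Fin n → ℂ)) + (Γ : Set (Fin n → ℂ))) := subset_closure hx
  rwa [← Hmod_coe] at this

lemma density_lemma {v : Fin n → ℂ} (hv : v ∈ Vmod Γ F) :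
    v ∈ closure (((F : Set (Fin n → ℂ)) + (Γ : Set (Fin n → ℂ)))
      ∩ (Vmod Γ F : Set (Fin n → ℂ))) := by
  obtain ⟨U, hUV⟩ := Submodule.exists_isCompl (Vmod Γ F)
  have hvH : v ∈ Hmod Γ F := Vmod_le_Hmod Γ F hv
  have hvcl : v ∈ closure ((F : Set (Fin n → ℂ)) + (Γ : Set (Fin n → ℂ))) := by
    rwa [← Hmod_coe]
  obtain ⟨g, hgmem, hgtend⟩ := mem_closure_iff_seq_limit.mp hvcl
  obtain ⟨ε, hε, hdisc⟩ := compl_discrete Γ F U hUV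
  set d : ℕ → (Fin n → ℂ) := fun j => PU Γ F U hUV (g j - v) with hd_def
  have hdH : ∀ j, d j ∈ Hmod Γ F := fun j =>
    PU_mem_Hmod Γ F U hUV (sub_mem (sum_mem_Hmod Γ F (hgmem j)) hvH)
  have hdU : ∀ j, d j ∈ U := fun j => PU_mem_U Γ F U hUV _
  have hdtend : Filter.Tendsto d Filter.atTop (nhds 0) := by
    have h1 : Filter.Tendsto (fun j => g j - v) Filter.atTop (nhds 0) := by
      have := hgtend.sub_const v
      rwa [sub_self] at this
    have := ((PU_continuous Γ F U hUV).tendsto 0).comp h1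
    rwa [map_zero] at this
  have hev : ∀ᶠ j in Filter.atTop, g j ∈ ((F : Set (Fin n → ℂ)) + (Γ : Set (Fin n → ℂ)))
      ∩ (Vmod Γ F : Set (Fin n → ℂ)) := by
    have hsmall : ∀ᶠ j in Filter.atTop, ‖d j‖ < ε := by
      have := hdtend.eventually (Metric.eventually_nhds_iff_ball.mpr
        ⟨ε, hε, fun y hy => hy⟩)
      filter_upwards [this] with j hj
      simpa [dist_zero_right] using Metric.mem_ball.mp hj
    filter_upwards [hsmall] with j hj
    have hd0 : d j = 0 := hdisc _ (hdH j) (hdU j) hj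
    have : g j - v ∈ Vmod Γ F := mem_V_of_PU_eq_zero Γ F U hUV hd0
    have hgV : g j ∈ Vmod Γ F := by
      have := (Vmod Γ F).add_mem this hv
      simpa using this
    exact ⟨hgmem j, hgV⟩
  exact mem_closure_of_tendsto hgtend hev

end Machine4

section Machine5
variable {n : ℕ} (Γ : AddSubgroup (Fin n → ℂ)) (F : Submodule ℂ (Fin n → ℂ))

lemma fixpoint_closed
    (hfix : (Γ : Set (Fin n → ℂ)) ∩ (Vmod Γ F : Set (Fin n → ℂ)) ⊆ (F : Set (Fin n → ℂ))) :
    IsClosed ((F : Set (Fin n → ℂ)) + (Γ : Set (Fin n → ℂ))) := by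
  have hFclosed : IsClosed (F : Set (Fin n → ℂ)) := Submodule.closed_of_finiteDimensional F
  have hVF : (Vmod Γ F : Set (Fin n → ℂ)) ⊆ (F : Set (Fin n → ℂ)) := by
    intro v hv
    have hd := density_lemma Γ F hv
    have hsub : (((F : Set (Fin n → ℂ)) + (Γ : Set (Fin n → ℂ)))
        ∩ (Vmod Γ F : Set (Fin n → ℂ))) ⊆ (F : Set (Fin n → ℂ)) := by
      rintro x ⟨hx1, hx2⟩
      obtain ⟨a, ha, γ, hγ, rfl⟩ := Set.mem_add.mp hx1
      have haV : a ∈ Vmod Γ F := F_le_Vmod Γ F ha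
      have hγV : γ ∈ Vmod Γ F := by
        have := (Vmod Γ F).sub_mem hx2 haV
        simpa using this
      have : γ ∈ (F : Set (Fin n → ℂ)) := hfix ⟨hγ, hγV⟩
      exact F.add_mem ha this
    have := closure_mono hsub hd
    rwa [hFclosed.closure_eq] at this
  have hset : ((F : Set (Fin n → ℂ)) + (Γ : Set (Fin n → ℂ))) = (Hmod Γ F : Set (Fin n → ℂ)) := by
    apply Set.Subset.antisymm
    · exact fun x hx => sum_mem_Hmod Γ F hx
    · intro h hh
      obtain ⟨U, hUV⟩ := Submodule.exists_isCompl (Vmod Γ F)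
      obtain ⟨ε, hε, hdisc⟩ := compl_discrete Γ F U hUV
      have hh' : h ∈ closure ((F : Set (Fin n → ℂ)) + (Γ : Set (Fin n → ℂ))) := by
        rwa [Hmod_coe] at hh
      obtain ⟨g, hgmem, hgtend⟩ := mem_closure_iff_seq_limit.mp hh'
      choose a ha γ hγ hsum using fun j => Set.mem_add.mp (hgmem j)
      set d : ℕ → (Fin n → ℂ) := fun j => PU Γ F U hUV (g j) with hd_def
      have hdγ : ∀ j, d j = PU Γ F U hUV (γ j) := by
        intro j
        show PU Γ F U hUV (g j) = PU Γ F U hUV (γ j)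
        rw [← hsum j, map_add, PU_eq_zero_of_mem_V Γ F U hUV (F_le_Vmod Γ F (ha j)),
          zero_add]
      have hdH : ∀ j, d j ∈ Hmod Γ F := by
        intro j
        rw [hdγ j]
        exact PU_mem_Hmod Γ F U hUV (subset_Hmod_right Γ F (hγ j))
      have hPUh : PU Γ F U hUV h ∈ Hmod Γ F := PU_mem_Hmod Γ F U hUV hh
      have hdtend : Filter.Tendsto d Filter.atTop (nhds (PU Γ F U hUV h)) :=
        (PU_continuous Γ F U hUV).tendsto h |>.comp hgtend
      have hev : ∀ᶠ j in Filter.atTop, d j = PU Γ F U hUV h := by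
        have h1 : Filter.Tendsto (fun j => d j - PU Γ F U hUV h) Filter.atTop (nhds 0) := by
          have := hdtend.sub_const (PU Γ F U hUV h)
          rwa [sub_self] at this
        have hsmall : ∀ᶠ j in Filter.atTop, ‖d j - PU Γ F U hUV h‖ < ε := by
          have := h1.eventually (Metric.eventually_nhds_iff_ball.mpr ⟨ε, hε, fun y hy => hy⟩)
          filter_upwards [this] with j hj
          simpa [dist_zero_right] using Metric.mem_ball.mp hj
        filter_upwards [hsmall] with j hj
        have hmem : d j - PU Γ F U hUV h ∈ Hmod Γ F := sub_mem (hdH j) hPUh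
        have hmemU : d j - PU Γ F U hUV h ∈ U :=
          U.sub_mem (PU_mem_U Γ F U hUV _) (PU_mem_U Γ F U hUV _)
        have := hdisc _ hmem hmemU hj
        exact sub_eq_zero.mp this
      obtain ⟨j, hj⟩ := hev.exists
      have hker : PU Γ F U hUV (h - γ j) = 0 := by
        rw [map_sub, ← hdγ j, hj, sub_self]
      have hhV : h - γ j ∈ Vmod Γ F := mem_V_of_PU_eq_zero Γ F U hUV hker
      have hhF : h - γ j ∈ (F : Set (Fin n → ℂ)) := hVF hhV
      have : (h - γ j) + γ j ∈ (F : Set (Fin n → ℂ)) + (Γ : Set (Fin n → ℂ)) :=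
        Set.add_mem_add hhF (hγ j)
      simpa using this
  rw [hset]
  exact Hmod_closed Γ F

lemma toroidal_step [DiscreteTopology Γ] (hFtor : IsToroidalSubspace Γ F) :
    IsToroidalSubspace Γ
      (F ⊔ Submodule.span ℂ ((Γ : Set (Fin n → ℂ)) ∩ (Vmod Γ F : Set (Fin n → ℂ)))) := by
  classical
  set F' := F ⊔ Submodule.span ℂ ((Γ : Set (Fin n → ℂ)) ∩ (Vmod Γ F : Set (Fin n → ℂ))) with hF'
  intro f hf
  obtain ⟨g, hg⟩ := f.exists_extend
  have hgapp : ∀ (x : Fin n → ℂ) (hx : x ∈ F'), g x = f ⟨x, hx⟩ := by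
    intro x hx
    have := congrArg (fun (k : F' →ₗ[ℂ] ℂ) => k ⟨x, hx⟩) hg
    simpa using this
  have hgcont : Continuous g := g.continuous_of_finiteDimensional
  have hgF : ∀ x ∈ F, g x = 0 := by
    have h0 := hFtor (g ∘ₗ F.subtype) (by
      intro x hx
      have hxF' : (x : Fin n → ℂ) ∈ F' := by
        rw [hF']; exact Submodule.mem_sup_left x.2
      obtain ⟨k, hk⟩ := hf ⟨x, hxF'⟩ hx
      exact ⟨k, by simpa [hgapp _ hxF'] using hk⟩)
    intro x hx
    have := congrArg (fun (k : F →ₗ[ℂ] ℂ) => k ⟨x, hx⟩) h0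
    simpa using this
  have hgΓV : ∀ x ∈ (Γ : Set (Fin n → ℂ)) ∩ (Vmod Γ F : Set (Fin n → ℂ)),
      g x ∈ Set.range ((↑) : ℤ → ℂ) := by
    intro x hx
    have hxF' : x ∈ F' := by
      rw [hF']
      exact Submodule.mem_sup_right (Submodule.subset_span hx)
    obtain ⟨k, hk⟩ := hf ⟨x, hxF'⟩ hx.1
    exact ⟨k, by rw [← hk, hgapp _ hxF']⟩
  have hgV : ∀ v ∈ Vmod Γ F, g v ∈ Set.range ((↑) : ℤ → ℂ) := by
    intro v hv
    have hd := density_lemma Γ F hv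
    have himg : g '' (((F : Set (Fin n → ℂ)) + (Γ : Set (Fin n → ℂ)))
        ∩ (Vmod Γ F : Set (Fin n → ℂ))) ⊆ Set.range ((↑) : ℤ → ℂ) := by
      rintro _ ⟨x, ⟨hx1, hx2⟩, rfl⟩
      obtain ⟨a, ha, γ, hγ, rfl⟩ := Set.mem_add.mp hx1
      have haV : a ∈ Vmod Γ F := F_le_Vmod Γ F ha
      have hγV : γ ∈ Vmod Γ F := by
        have := (Vmod Γ F).sub_mem hx2 haV
        simpa using this
      rw [map_add, hgF a ha, zero_add]
      exact hgΓV γ ⟨hγ, hγV⟩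
    have h1 : g v ∈ g '' closure (((F : Set (Fin n → ℂ)) + (Γ : Set (Fin n → ℂ)))
        ∩ (Vmod Γ F : Set (Fin n → ℂ))) := ⟨v, hd, rfl⟩
    have h2 := image_closure_subset_closure_image hgcont h1
    have h3 := closure_mono himg h2
    rwa [isClosed_intRange.closure_eq] at h3
  have hpre : IsPreconnected (g '' (Vmod Γ F : Set (Fin n → ℂ))) :=
    ((Vmod Γ F).convex.isPreconnected).image g hgcont.continuousOn
  have hsub : (g '' (Vmod Γ F : Set (Fin n → ℂ))).Subsingleton := by
    refine subsingleton_of_preconnected_of_sep ?_ one_pos intRange_sep hpre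
    rintro _ ⟨v, hv, rfl⟩
    exact hgV v hv
  have hg0 : ∀ v ∈ Vmod Γ F, g v = 0 := by
    intro v hv
    have h1 : g v ∈ g '' (Vmod Γ F : Set (Fin n → ℂ)) := ⟨v, hv, rfl⟩
    have h2 : (0 : ℂ) ∈ g '' (Vmod Γ F : Set (Fin n → ℂ)) :=
      ⟨0, (Vmod Γ F).zero_mem, map_zero g⟩
    exact hsub h1 h2
  have hker : F' ≤ LinearMap.ker g := by
    rw [hF']
    refine sup_le (fun x hx => ?_) ?_
    · exact LinearMap.mem_ker.mpr (hgF x hx)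
    · rw [Submodule.span_le]
      intro x hx
      exact LinearMap.mem_ker.mpr (hg0 x hx.2)
  refine LinearMap.ext fun y => ?_
  have : g (y : Fin n → ℂ) = 0 := hker y.2
  rw [← hgapp _ y.2] at *
  simpa using this

end Machine5

section MachineMain
variable {n : ℕ}

lemma machine (Γ : AddSubgroup (Fin n → ℂ)) [DiscreteTopology Γ]
    (hsimple : GeometricallySimple Γ)
    (Θ : (Fin n → ℂ) →ₗ[ℂ] (Fin n → ℂ)) (hΘΓ : ∀ γ ∈ Γ, Θ γ ∈ Γ)
    (S : Submodule ℂ (Fin n → ℂ)) (hS0 : S ≠ ⊥)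
    (hStor : IsToroidalSubspace Γ S) (hSker : ∀ x ∈ S, Θ x = 0) : Θ = 0 := by
  classical
  set step : Submodule ℂ (Fin n → ℂ) → Submodule ℂ (Fin n → ℂ) :=
    fun F => F ⊔ Submodule.span ℂ ((Γ : Set (Fin n → ℂ)) ∩ (Vmod Γ F : Set (Fin n → ℂ)))
    with hstep
  set FF : ℕ → Submodule ℂ (Fin n → ℂ) := fun i => step^[i] S with hFF
  have hFF0 : FF 0 = S := rfl
  have hFFsucc : ∀ i, FF (i + 1) = step (FF i) := fun i =>
    Function.iterate_succ_apply' step i S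
  have hmono : ∀ i, FF i ≤ FF (i + 1) := fun i => by
    rw [hFFsucc]; exact le_sup_left
  have hchain : ∀ i, S ≤ FF i := by
    intro i
    induction i with
    | zero => exact le_of_eq hFF0.symm
    | succ i ih => exact le_trans ih (hmono i)
  have hinv : ∀ i, IsToroidalSubspace Γ (FF i) ∧ (∀ x ∈ FF i, Θ x = 0) := by
    intro i
    induction i with
    | zero => exact ⟨hStor, hSker⟩
    | succ i ih =>
      obtain ⟨htori, hkeri⟩ := ih
      have hVz := Theta_Vmod_zero Γ (FF i) Θ hΘΓ hkeri
      constructor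
      · rw [hFFsucc]
        exact toroidal_step Γ (FF i) htori
      · rw [hFFsucc]
        have hle : step (FF i) ≤ LinearMap.ker Θ := by
          refine sup_le (fun x hx => LinearMap.mem_ker.mpr (hkeri x hx)) ?_
          rw [Submodule.span_le]
          intro x hx
          exact LinearMap.mem_ker.mpr (hVz x hx.2)
        exact fun x hx => LinearMap.mem_ker.mp (hle hx)
  have hfix : ∃ i, FF (i + 1) = FF i := by
    by_contra hcon
    push_neg at hcon
    have hlt : ∀ i, FF i < FF (i + 1) := fun i =>
      lt_of_le_of_ne (hmono i) (Ne.symm (hcon i))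
    have hrank : ∀ i, i ≤ Module.finrank ℂ (FF i) := by
      intro i
      induction i with
      | zero => simp
      | succ i ih =>
        have := Submodule.finrank_lt_finrank_of_lt (hlt i)
        omega
    have h1 := hrank (n + 1)
    have h2 : Module.finrank ℂ (FF (n + 1)) ≤ Module.finrank ℂ (Fin n → ℂ) :=
      Submodule.finrank_le _
    rw [Module.finrank_fin_fun ℂ] at h2
    omega
  obtain ⟨i, hi⟩ := hfix
  have hspanle : Submodule.span ℂ ((Γ : Set (Fin n → ℂ))
      ∩ (Vmod Γ (FF i) : Set (Fin n → ℂ))) ≤ FF i := by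
    have h := hi
    rw [hFFsucc] at h
    exact sup_eq_left.mp h
  have hclosed := fixpoint_closed Γ (FF i)
    (fun x hx => hspanle (Submodule.subset_span hx))
  rcases hsimple (FF i) hclosed (hinv i).1 with hbot | htop
  · exfalso
    apply hS0
    have hle : S ≤ FF i := hchain i
    rw [hbot] at hle
    exact le_bot_iff.mp hle
  · refine LinearMap.ext fun x => ?_
    have hx : x ∈ FF i := htop ▸ Submodule.mem_top
    simpa using (hinv i).2 x hx

end MachineMain

section Algebra1
variable {n : ℕ} (Γ : AddSubgroup (Fin n → ℂ))

/-- The restriction of `Φ` to `Γ` as a `ℤ`-linear endomorphism. -/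
noncomputable def restrictGamma (Φ : (Fin n → ℂ) →ₗ[ℂ] (Fin n → ℂ))
    (hΦΓ : ∀ γ ∈ Γ, Φ γ ∈ Γ) : ↥Γ.toIntSubmodule →ₗ[ℤ] ↥Γ.toIntSubmodule where
  toFun x := ⟨Φ x, hΦΓ x x.2⟩
  map_add' x y := Subtype.ext (by simp)
  map_smul' m x := Subtype.ext (map_zsmul Φ m (x : Fin n → ℂ))

lemma pow_coe (Φ : (Fin n → ℂ) →ₗ[ℂ] (Fin n → ℂ)) (hΦΓ : ∀ γ ∈ Γ, Φ γ ∈ Γ) (k : ℕ)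
    (γ : ↥Γ.toIntSubmodule) :
    (Φ ^ k) (γ : Fin n → ℂ) = (((restrictGamma Γ Φ hΦΓ) ^ k) γ : Fin n → ℂ) := by
  induction k generalizing γ with
  | zero => simp
  | succ k ih =>
    rw [pow_succ, pow_succ, Module.End.mul_apply, Module.End.mul_apply]
    have h1 : ((restrictGamma Γ Φ hΦΓ) γ : Fin n → ℂ) = Φ (γ : Fin n → ℂ) := rfl
    rw [← h1, ih]

lemma aeval_coe (Φ : (Fin n → ℂ) →ₗ[ℂ] (Fin n → ℂ)) (hΦΓ : ∀ γ ∈ Γ, Φ γ ∈ Γ)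
    (s : Polynomial ℤ) (γ : ↥Γ.toIntSubmodule) :
    (Polynomial.aeval (Φ : Module.End ℂ (Fin n → ℂ)) s) (γ : Fin n → ℂ)
      = ((Polynomial.aeval (restrictGamma Γ Φ hΦΓ) s) γ : Fin n → ℂ) := by
  induction s using Polynomial.induction_on' with
  | add p q hp hq =>
    rw [Polynomial.aeval_add, Polynomial.aeval_add, LinearMap.add_apply, LinearMap.add_apply,
      hp, hq]
    rfl
  | monomial k a =>
    rw [Polynomial.aeval_monomial, Polynomial.aeval_monomial]
    rw [Module.End.mul_apply, Module.End.mul_apply]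
    rw [pow_coe Γ Φ hΦΓ k γ]
    simp only [Module.algebraMap_end_apply]
    rfl

lemma aeval_mem (Φ : (Fin n → ℂ) →ₗ[ℂ] (Fin n → ℂ)) (hΦΓ : ∀ γ ∈ Γ, Φ γ ∈ Γ)
    (s : Polynomial ℤ) (x : Fin n → ℂ) (hx : x ∈ Γ) :
    (Polynomial.aeval (Φ : Module.End ℂ (Fin n → ℂ)) s) x ∈ Γ := by
  have := aeval_coe Γ Φ hΦΓ s ⟨x, hx⟩
  rw [this]
  exact ((Polynomial.aeval (restrictGamma Γ Φ hΦΓ) s) ⟨x, hx⟩).2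

end Algebra1

section Algebra2
variable {n : ℕ}

lemma good_poly (Γ : AddSubgroup (Fin n → ℂ))
    (Φ : (Fin n → ℂ) →ₗ[ℂ] (Fin n → ℂ)) (hΦΓ : ∀ γ ∈ Γ, Φ γ ∈ Γ)
    (r : Polynomial ℤ) (hr0 : r.coeff 0 ≠ 0)
    (hr : Polynomial.aeval (Φ : Module.End ℂ (Fin n → ℂ)) r = 0) :
    Function.Injective Φ ∧ ∃ Ψ : (Fin n → ℂ) →ₗ[ℂ] (Fin n → ℂ),
      (∀ γ ∈ Γ, Ψ γ ∈ Γ) ∧ ∃ N : ℤ, N ≠ 0 ∧ Ψ ∘ₗ Φ = (N : ℂ) • LinearMap.id := by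
  set Q : Module.End ℂ (Fin n → ℂ) := Polynomial.aeval Φ r.divX with hQdef
  set N : ℤ := r.coeff 0 with hNdef
  have hNC : (N : ℂ) ≠ 0 := Int.cast_ne_zero.mpr hr0
  have hkey : ∀ x, Q (Φ x) = -((N : ℂ) • x) := by
    intro x
    have h1 : (r.divX * Polynomial.X + Polynomial.C N : Polynomial ℤ) = r := by
      rw [mul_comm]
      exact Polynomial.X_mul_divX_add r
    have h2 := congrArg (Polynomial.aeval (Φ : Module.End ℂ (Fin n → ℂ))) h1
    rw [hr, Polynomial.aeval_add, Polynomial.aeval_mul, Polynomial.aeval_X,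
      Polynomial.aeval_C] at h2
    have h3 := congrArg (fun (f : Module.End ℂ (Fin n → ℂ)) => f x) h2
    simp only [LinearMap.add_apply, Module.End.mul_apply, Module.algebraMap_end_apply,
      LinearMap.zero_apply] at h3
    have h4 : Q (Φ x) + (N : ℂ) • x = 0 := by
      rw [← Int.cast_smul_eq_zsmul ℂ N x] at h3
      exact h3
    exact eq_neg_of_add_eq_zero_left h4
  refine ⟨?_, ⟨-Q, ?_, N, hr0, ?_⟩⟩
  · intro x y hxy
    have h1 := hkey x
    have h2 := hkey y
    rw [hxy, h2] at h1
    have : (N : ℂ) • x = (N : ℂ) • y := (neg_injective h1).symm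
    exact smul_right_injective (Fin n → ℂ) hNC this
  · intro γ hγ
    have : Q γ ∈ Γ := aeval_mem Γ Φ hΦΓ r.divX γ hγ
    simpa using neg_mem this
  · refine LinearMap.ext fun x => ?_
    have := hkey x
    simp only [LinearMap.comp_apply, LinearMap.neg_apply, LinearMap.smul_apply,
      LinearMap.id_apply]
    rw [this]
    simp

lemma strip (Γ : AddSubgroup (Fin n → ℂ)) [DiscreteTopology Γ]
    (htor : IsToroidalSubspace Γ (⊤ : Submodule ℂ (Fin n → ℂ)))
    (hsimple : GeometricallySimple Γ)
    (Φ : (Fin n → ℂ) →ₗ[ℂ] (Fin n → ℂ)) (hΦΓ : ∀ γ ∈ Γ, Φ γ ∈ Γ) (hΦ : Φ ≠ 0) :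
    ∀ m : ℕ, ∀ r : Polynomial ℤ, r ≠ 0 → r.natDegree ≤ m →
      Polynomial.aeval (Φ : Module.End ℂ (Fin n → ℂ)) r = 0 →
      Function.Injective Φ ∧ ∃ Ψ : (Fin n → ℂ) →ₗ[ℂ] (Fin n → ℂ),
        (∀ γ ∈ Γ, Ψ γ ∈ Γ) ∧ ∃ N : ℤ, N ≠ 0 ∧ Ψ ∘ₗ Φ = (N : ℂ) • LinearMap.id := by
  intro m
  induction m with
  | zero =>
    intro r hr hd hann
    by_cases h0 : r.coeff 0 = 0
    · exfalso
      apply hr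
      have : r = Polynomial.C (r.coeff 0) :=
        Polynomial.eq_C_of_natDegree_le_zero hd
      rw [this, h0, map_zero]
    · exact good_poly Γ Φ hΦΓ r h0 hann
  | succ m ih =>
    intro r hr hd hann
    by_cases h0 : r.coeff 0 = 0
    · have hXdvd : Polynomial.X * r.divX = r := by
        have h1 := Polynomial.X_mul_divX_add (p := r)
        rwa [h0, map_zero, add_zero] at h1
      have hdivne : r.divX ≠ 0 := fun h => hr (by rw [← hXdvd, h, mul_zero])
      set ψ : Module.End ℂ (Fin n → ℂ) := Polynomial.aeval Φ r.divX with hψdef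
      have hψΓ : ∀ γ ∈ Γ, ψ γ ∈ Γ := fun γ hγ => aeval_mem Γ Φ hΦΓ r.divX γ hγ
      by_cases hψ : ψ = 0
      · refine ih r.divX hdivne ?_ hψ
        have h2 := Polynomial.natDegree_divX_eq_natDegree_tsub_one (p := r)
        omega
      · exfalso
        apply hΦ
        refine machine Γ hsimple Φ hΦΓ (LinearMap.range ψ) ?_ ?_ ?_
        · rw [ne_eq, LinearMap.range_eq_bot]
          exact hψ
        · exact seed_toroidal Γ htor ψ hψΓ
        · rintro x ⟨y, rfl⟩
          have h3 : Φ (ψ y) = (Polynomial.aeval (Φ : Module.End ℂ (Fin n → ℂ))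
              (Polynomial.X * r.divX)) y := by
            rw [Polynomial.aeval_mul, Polynomial.aeval_X, Module.End.mul_apply]
          rw [h3, hXdvd, hann]
          rfl
    · exact good_poly Γ Φ hΦΓ r h0 hann

end Algebra2

theorem stmt_14 (n : ℕ) (Γ : AddSubgroup (Fin n → ℂ)) [DiscreteTopology Γ]
    (htor : IsToroidalSubspace Γ (⊤ : Submodule ℂ (Fin n → ℂ)))
    (hsimple : GeometricallySimple Γ)
    (Φ : (Fin n → ℂ) →ₗ[ℂ] (Fin n → ℂ))
    (hΦΓ : ∀ γ ∈ Γ, Φ γ ∈ Γ) (hΦ : Φ ≠ 0) :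
    Function.Injective Φ ∧
    ∃ Ψ : (Fin n → ℂ) →ₗ[ℂ] (Fin n → ℂ),
      (∀ γ ∈ Γ, Ψ γ ∈ Γ) ∧ ∃ N : ℤ, N ≠ 0 ∧ Ψ ∘ₗ Φ = (N : ℂ) • LinearMap.id := by
  haveI hdiscI : DiscreteTopology ↥(Γ.toIntSubmodule) := ‹DiscreteTopology ↥Γ›
  have hp := (restrictGamma Γ Φ hΦΓ).aeval_self_charpoly
  have hpne : (restrictGamma Γ Φ hΦΓ).charpoly ≠ 0 :=
    (restrictGamma Γ Φ hΦΓ).charpoly_monic.ne_zero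
  have hann : Polynomial.aeval (Φ : Module.End ℂ (Fin n → ℂ))
      (restrictGamma Γ Φ hΦΓ).charpoly = 0 := by
    have hker : ∀ x ∈ Γ, (Polynomial.aeval (Φ : Module.End ℂ (Fin n → ℂ))
        (restrictGamma Γ Φ hΦΓ).charpoly) x = 0 := by
      intro x hx
      rw [aeval_coe Γ Φ hΦΓ _ ⟨x, hx⟩, hp]
      simp
    have hsp : Submodule.span ℂ (Γ : Set (Fin n → ℂ)) ≤
        LinearMap.ker (Polynomial.aeval (Φ : Module.End ℂ (Fin n → ℂ))
          (restrictGamma Γ Φ hΦΓ).charpoly) :=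
      Submodule.span_le.mpr (fun x hx => LinearMap.mem_ker.mpr (hker x hx))
    rw [span_gamma_top Γ htor] at hsp
    exact LinearMap.ext fun x => LinearMap.mem_ker.mp (hsp Submodule.mem_top)
  exact strip Γ htor hsimple Φ hΦΓ hΦ (restrictGamma Γ Φ hΦΓ).charpoly.natDegree
    (restrictGamma Γ Φ hΦΓ).charpoly hpne le_rfl hann
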